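/- arXiv:1912.07583 — 3 statements merged into one kernel-verified Lean document; each statement's English description precedes it below -/
import Mathlib

section
/- Let X be a global 2-torsion group law and A an elementary abelian 2-group with linearly independent characters V₁, ..., V_n ∈ A* (A* = Hom(A, C₂) as 𝔽₂-vector space). Then the sequence of Euler classes (e_{V₁}, ..., e_{V_n}) is a regular sequence in X(A), and it generates the kernel of the restriction map X(A) → X(∩ᵢ ker Vᵢ). -/
open CategoryTheory Opposite

/-- The category of elementary abelian 2-groups, modeled as finite `ℤ/2`-vector spaces. -/
abbrev EA2 : Type 1 := FGModuleCat (ZMod 2)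

/-- The cyclic group `C₂` of order 2. -/
noncomputable def C2 : EA2 := FGModuleCat.of (ZMod 2) (ZMod 2)

/-- The trivial elementary abelian 2-group. -/
noncomputable def trivGrp : EA2 := FGModuleCat.of (ZMod 2) PUnit

/-- The kernel of a character `V : A → C₂`, as an elementary abelian 2-group. -/
noncomputable def kerObj {A : EA2} (V : A ⟶ C2) : EA2 :=
  FGModuleCat.of (ZMod 2) (LinearMap.ker V.hom.hom)

/-- The inclusion `ker V ↪ A`. -/
noncomputable def kerIncl {A : EA2} (V : A ⟶ C2) : kerObj V ⟶ A :=
  FGModuleCat.ofHom (LinearMap.ker V.hom.hom).subtype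

/-- A global 2-torsion group law: a contravariant functor `X` from elementary abelian
2-groups to commutative rings together with a coordinate `e ∈ X(C₂)` such that for every
elementary abelian 2-group `A` and nontrivial character `V : A → C₂` the sequence
`0 → X(A) --(·e_V)--> X(A) --res--> X(ker V) → 0` is exact, where `e_V = X(V)(e)`. -/
structure GlobalTwoTorsionGroupLaw where
  X : EA2ᵒᵖ ⥤ CommRingCat
  e : X.obj (op C2)
  euler_regular : ∀ (A : EA2) (V : A ⟶ C2), V ≠ 0 →
    Function.Injective (fun x : X.obj (op A) => x * X.map V.op e)
  euler_exact : ∀ (A : EA2) (V : A ⟶ C2), V ≠ 0 → ∀ x : X.obj (op A),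
    X.map (kerIncl V).op x = 0 ↔ ∃ y : X.obj (op A), x = y * X.map V.op e
  res_surjective : ∀ (A : EA2) (V : A ⟶ C2), V ≠ 0 →
    Function.Surjective (X.map (kerIncl V).op)

/-- The intersection `∩ᵢ ker Vᵢ` of the kernels of a family of characters. -/
noncomputable def interSub {A : EA2} {n : ℕ} (V : Fin n → (A ⟶ C2)) :
    Submodule (ZMod 2) A :=
  ⨅ i, LinearMap.ker (V i).hom.hom

/-- The intersection `∩ᵢ ker Vᵢ`, as an elementary abelian 2-group. -/
noncomputable def interObj {A : EA2} {n : ℕ} (V : Fin n → (A ⟶ C2)) : EA2 :=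
  FGModuleCat.of (ZMod 2) (interSub V)

/-- The inclusion `∩ᵢ ker Vᵢ ↪ A`. -/
noncomputable def interIncl {A : EA2} {n : ℕ} (V : Fin n → (A ⟶ C2)) : interObj V ⟶ A :=
  FGModuleCat.ofHom (interSub V).subtype

/-! ### Auxiliary lemmas -/


open scoped Pointwise

lemma GTTGL.smul_top_eq {R : Type*} [CommRing R] (r : R) :
    (r • ⊤ : Submodule R R) = Ideal.span {r} := by
  rw [← Submodule.ideal_span_singleton_smul, smul_eq_mul, Ideal.mul_top]

open RingTheory.Sequence in
lemma GTTGL.transfer {R S : Type*} [CommRing R] [CommRing S] (f : R →+* S)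
    (hf : Function.Surjective f) (r : R) (hker : RingHom.ker f = Ideal.span {r})
    (rs : List R) :
    IsWeaklyRegular (QuotSMulTop r R) rs ↔ IsWeaklyRegular S (rs.map f) := by
  have h1 : (r • ⊤ : Submodule R R) = (RingHom.ker f : Ideal R) := by
    rw [GTTGL.smul_top_eq, hker]
  let e : QuotSMulTop r R ≃+ S :=
    ((Ideal.quotEquivOfEq h1).trans (RingHom.quotientKerEquivOfSurjective hf)).toAddEquiv
  have he : ∀ x : R, e (Submodule.Quotient.mk x) = f x := by
    intro x
    show (RingHom.quotientKerEquivOfSurjective hf)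
      ((Ideal.quotEquivOfEq h1) (Ideal.Quotient.mk _ x)) = f x
    rw [Ideal.quotEquivOfEq_mk]
    exact RingHom.kerLift_mk f x
  refine AddEquiv.isWeaklyRegular_congr (e := e) ?_
  refine List.forall₂_map_right_iff.mpr (List.forall₂_same.mpr fun a _ x => ?_)
  obtain ⟨y, rfl⟩ := Submodule.Quotient.mk_surjective _ x
  rw [← Submodule.Quotient.mk_smul, smul_eq_mul, he, he, map_mul, smul_eq_mul]

lemma GTTGL.char_descent {A : Type*} [AddCommGroup A] [Module (ZMod 2) A]
    (V₀ K : A →ₗ[ZMod 2] ZMod 2) (h : LinearMap.ker V₀ ≤ LinearMap.ker K) :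
    K = 0 ∨ K = V₀ := by
  have h' : ⨅ _i : Fin 1, LinearMap.ker V₀ ≤ LinearMap.ker K := by simpa using h
  have hm := mem_span_of_iInf_ker_le_ker (L := fun _ : Fin 1 => V₀) (K := K) h'
  rw [Set.range_const, Submodule.mem_span_singleton] at hm
  obtain ⟨c, rfl⟩ := hm
  fin_cases c
  · left; exact zero_smul _ _
  · right; exact one_smul _ _

lemma GTTGL.indep_descent {A : Type*} [AddCommGroup A] [Module (ZMod 2) A] {n : ℕ}
    (V : Fin (n + 1) → (A →ₗ[ZMod 2] ZMod 2)) (hV : LinearIndependent (ZMod 2) V) :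
    LinearIndependent (ZMod 2)
      (fun i : Fin n => (V i.succ).comp (LinearMap.ker (V 0)).subtype) := by
  rw [Fintype.linearIndependent_iff] at hV ⊢
  intro g hg
  set K : A →ₗ[ZMod 2] ZMod 2 := ∑ i, g i • V i.succ with hK
  have hker : LinearMap.ker (V 0) ≤ LinearMap.ker K := by
    intro a ha
    have h2 := LinearMap.congr_fun hg ⟨a, ha⟩
    simp only [LinearMap.coe_sum, Finset.sum_apply, LinearMap.smul_apply,
      LinearMap.comp_apply, Submodule.coe_subtype, LinearMap.zero_apply,
      smul_eq_mul] at h2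
    simp only [LinearMap.mem_ker, hK, LinearMap.coe_sum, Finset.sum_apply,
      LinearMap.smul_apply, smul_eq_mul]
    exact h2
  have key : ∀ c : ZMod 2, K = c • V 0 → ∀ i, g i = 0 := by
    intro c hc i
    have hsum : ∑ j, (Fin.cons (-c) g : Fin (n+1) → ZMod 2) j • V j = 0 := by
      rw [Fin.sum_univ_succ]
      simp only [Fin.cons_succ, Fin.cons_zero, ← hK, hc, neg_smul]
      rw [← add_smul, neg_add_cancel, zero_smul]
    have := hV (Fin.cons (-c) g) hsum i.succ
    simpa using this
  rcases GTTGL.char_descent (V 0) K hker with h | h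
  · exact key 0 (by simpa using h)
  · exact key 1 (by simpa using h)

/-- the comparison map `∩ᵢ₌₀ⁿ ker Vᵢ ⟶ ∩ᵢ₌₁ⁿ ker (Vᵢ|ker V₀)`. -/
noncomputable def GTTGL.stepHom {A : EA2} {n : ℕ} (V : Fin (n + 1) → (A ⟶ C2)) :
    interObj V ⟶ interObj (fun i : Fin n => kerIncl (V 0) ≫ V i.succ) := FGModuleCat.ofHom {
  toFun a :=
    ⟨⟨a.1, (Submodule.mem_iInf _).mp a.2 0⟩, (Submodule.mem_iInf _).mpr fun i =>
      show (V i.succ).hom.hom a.1 = 0 from (Submodule.mem_iInf _).mp a.2 i.succ⟩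
  map_add' _ _ := rfl
  map_smul' _ _ := rfl }

/-- the inverse comparison map. -/
noncomputable def GTTGL.stepInv {A : EA2} {n : ℕ} (V : Fin (n + 1) → (A ⟶ C2)) :
    interObj (fun i : Fin n => kerIncl (V 0) ≫ V i.succ) ⟶ interObj V := FGModuleCat.ofHom {
  toFun b :=
    ⟨b.1.1, (Submodule.mem_iInf _).mpr fun i => by
      refine Fin.cases ?_ (fun j => ?_) i
      · exact b.1.2
      · exact (Submodule.mem_iInf _).mp b.2 j⟩
  map_add' _ _ := rfl
  map_smul' _ _ := rfl }

open RingTheory.Sequence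

noncomputable def GTTGL.homEquiv (X : EA2) : (X ⟶ C2) ≃ₗ[ZMod 2] (X →ₗ[ZMod 2] ZMod 2) :=
  InducedCategory.homLinearEquiv.trans ModuleCat.homLinearEquiv

/-- For a global 2-torsion group law `X` and linearly independent
characters `V₁, ..., V_n ∈ A* = Hom(A, C₂)`, the Euler classes `(e_{V₁}, ..., e_{V_n})` form
a regular sequence in `X(A)` generating the kernel of the restriction
`X(A) → X(∩ᵢ ker Vᵢ)`. -/
theorem stmt12 (L : GlobalTwoTorsionGroupLaw) (A : EA2) (n : ℕ)
    (V : Fin n → (A ⟶ C2)) (hV : LinearIndependent (ZMod 2) V) :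
    RingTheory.Sequence.IsWeaklyRegular (L.X.obj (op A))
      (List.ofFn fun i : Fin n => L.X.map (V i).op L.e) ∧
    RingHom.ker ((L.X.map (interIncl V).op).hom : L.X.obj (op A) →+* L.X.obj (op (interObj V)))
      = Ideal.span (Set.range fun i : Fin n => L.X.map (V i).op L.e) := by
  induction n generalizing A with
  | zero =>
    constructor
    · rw [List.ofFn_zero]
      exact RingTheory.Sequence.IsWeaklyRegular.nil _ _
    · have hrange : (Set.range fun i : Fin 0 => L.X.map (V i).op L.e) = ∅ :=
        Set.range_eq_empty _
      rw [hrange, Ideal.span_empty, ← RingHom.injective_iff_ker_eq_bot]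
      -- `interIncl V` is (split) mono, indeed iso
      let ι : A ⟶ interObj V :=
        FGModuleCat.ofHom
        { toFun := fun a => ⟨a, (Submodule.mem_iInf _).mpr (fun i => i.elim0)⟩
          map_add' := fun _ _ => rfl
          map_smul' := fun _ _ => rfl }
      have hsplit : ι ≫ interIncl V = 𝟙 A := rfl
      intro x y h
      have h2 : L.X.map (interIncl V).op ≫ L.X.map ι.op = 𝟙 _ := by
        rw [← L.X.map_comp, ← op_comp, hsplit, op_id, L.X.map_id]
      calc x = (L.X.map (interIncl V).op ≫ L.X.map ι.op) x := by rw [h2]; rfl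
        _ = L.X.map ι.op (L.X.map (interIncl V).op y) := by
              show L.X.map ι.op (L.X.map (interIncl V).op x) = _; rw [h]
        _ = y := by rw [← comp_apply, h2]; rfl
  | succ n IH =>
    set r : L.X.obj (op A) := L.X.map (V 0).op L.e with hr
    have hV0 : V 0 ≠ 0 := hV.ne_zero 0
    set B : EA2 := kerObj (V 0) with hB
    set f : L.X.obj (op A) →+* L.X.obj (op B) := (L.X.map (kerIncl (V 0)).op :
      L.X.obj (op A) ⟶ L.X.obj (op B)).hom with hf
    have hf_surj : Function.Surjective f := L.res_surjective A (V 0) hV0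
    have hker_f : RingHom.ker f = Ideal.span {r} := by
      ext x
      rw [RingHom.mem_ker, Ideal.mem_span_singleton]
      rw [show (f x = 0) ↔ _ from L.euler_exact A (V 0) hV0 x]
      constructor
      · rintro ⟨y, rfl⟩; exact ⟨y, mul_comm y r⟩
      · rintro ⟨y, rfl⟩; exact ⟨y, mul_comm r y⟩
    set W : Fin n → (B ⟶ C2) := fun i => kerIncl (V 0) ≫ V i.succ with hWdef
    have hW : LinearIndependent (ZMod 2) W := by
      have h1 := hV.map' (GTTGL.homEquiv A).toLinearMap (GTTGL.homEquiv A).ker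
      have h2 := GTTGL.indep_descent _ h1
      refine LinearIndependent.of_comp (GTTGL.homEquiv B).toLinearMap ?_
      exact h2
    obtain ⟨ihreg, ihker⟩ := IH B W hW
    have hEW : ∀ i : Fin n, L.X.map (W i).op L.e = f (L.X.map (V i.succ).op L.e) := by
      intro i
      have h1 : (W i).op = (V i.succ).op ≫ (kerIncl (V 0)).op := rfl
      rw [h1, L.X.map_comp]
      rfl
    constructor
    · rw [List.ofFn_succ]
      refine (isWeaklyRegular_cons_iff _ _ _).mpr ⟨?_, ?_⟩
      · intro a b h
        have : a * r = b * r := by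
          simp only [smul_eq_mul] at h
          rw [mul_comm a, mul_comm b]
          exact h
        exact L.euler_regular A (V 0) hV0 this
      · rw [GTTGL.transfer f hf_surj r hker_f, List.map_ofFn]
        have : (f ∘ fun i : Fin n => L.X.map (V i.succ).op L.e)
            = fun i : Fin n => L.X.map (W i).op L.e := by
          funext i; exact (hEW i).symm
        rw [this]
        exact ihreg
    · -- kernel computation
      set φ := GTTGL.stepHom V with hφ
      set ψ := GTTGL.stepInv V with hψ
      have hψφ : ψ ≫ φ = 𝟙 (interObj W) := by
        apply FGModuleCat.hom_ext
        apply LinearMap.ext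
        intro b
        apply Subtype.ext
        apply Subtype.ext
        rfl
      have hcomp : interIncl V = φ ≫ (interIncl W ≫ kerIncl (V 0)) := rfl
      have hφinj : Function.Injective (L.X.map φ.op) := by
        intro x y h
        have h2 : L.X.map φ.op ≫ L.X.map ψ.op = 𝟙 _ := by
          rw [← L.X.map_comp, ← op_comp, hψφ, op_id, L.X.map_id]
        calc x = (L.X.map φ.op ≫ L.X.map ψ.op) x := by rw [h2]; rfl
          _ = L.X.map ψ.op (L.X.map φ.op y) := by
                show L.X.map ψ.op (L.X.map φ.op x) = _; rw [h]
          _ = y := by rw [← comp_apply, h2]; rfl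
      have hfac : ∀ x : L.X.obj (op A), L.X.map (interIncl V).op x
          = L.X.map φ.op (L.X.map (interIncl W).op (f x)) := by
        intro x
        have h1 : (interIncl V).op
            = (kerIncl (V 0)).op ≫ (interIncl W).op ≫ φ.op := by
          rw [hcomp]; rfl
        rw [h1, L.X.map_comp, L.X.map_comp]
        rfl
      have hkerV : RingHom.ker ((L.X.map (interIncl V).op).hom :
            L.X.obj (op A) →+* L.X.obj (op (interObj V)))
          = Ideal.comap f (RingHom.ker ((L.X.map (interIncl W).op).hom :
            L.X.obj (op B) →+* L.X.obj (op (interObj W)))) := by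
        ext x
        rw [RingHom.mem_ker, Ideal.mem_comap, RingHom.mem_ker, hfac]
        constructor
        · intro h
          apply hφinj
          rw [h, map_zero]
        · intro h
          rw [show ((L.X.map (interIncl W).op).hom : L.X.obj (op B) →+* _) (f x) = 0 from h,
            map_zero]
      rw [hkerV, ihker]
      have hrange : (Set.range fun i : Fin n => L.X.map (W i).op L.e)
          = f '' (Set.range fun i : Fin n => L.X.map (V i.succ).op L.e) := by
        rw [← Set.range_comp]
        exact congrArg Set.range (funext fun i => hEW i)
      rw [hrange, ← Ideal.map_span, Ideal.comap_map_of_surjective f hf_surj]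
      have hbot : Ideal.comap f ⊥ = RingHom.ker f := rfl
      rw [hbot, hker_f]
      have hins : (Set.range fun i : Fin (n+1) => L.X.map (V i).op L.e)
          = insert r (Set.range fun i : Fin n => L.X.map (V i.succ).op L.e) := by
        exact Fin.range_fin_succ _
      rw [hins, Ideal.span_insert, sup_comm]
end

section
/- Let X be a global 2-torsion group law. Writing e_{1,0}, e_{0,1}, e_{1,1} ∈ X(C₂×C₂) for the Euler classes of the two projections and the multiplication map C₂×C₂ → C₂, there exists x' ∈ X(C₂×C₂) with e_{1,1} = e_{1,0} + e_{0,1} + x'·e_{1,0}·e_{0,1}. -/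
open CategoryTheory Opposite

/-- The Klein four-group `C₂ × C₂`. -/
noncomputable def C2xC2 : EA2 := FGModuleCat.of (ZMod 2) (ZMod 2 × ZMod 2)

/-- The first projection `C₂ × C₂ → C₂`. -/
noncomputable def pr1 : C2xC2 ⟶ C2 := FGModuleCat.ofHom (LinearMap.fst (ZMod 2) (ZMod 2) (ZMod 2))

/-- The second projection `C₂ × C₂ → C₂`. -/
noncomputable def pr2 : C2xC2 ⟶ C2 := FGModuleCat.ofHom (LinearMap.snd (ZMod 2) (ZMod 2) (ZMod 2))

/-- The multiplication character `C₂ × C₂ → C₂`, `(a,b) ↦ ab`. -/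
noncomputable def mul11 : C2xC2 ⟶ C2 :=
  FGModuleCat.ofHom (LinearMap.fst (ZMod 2) (ZMod 2) (ZMod 2) + LinearMap.snd (ZMod 2) (ZMod 2) (ZMod 2))

/-! ### Auxiliary lemmas -/

lemma id_C2_ne_zero : (𝟙 C2 : C2 ⟶ C2) ≠ 0 := by
  intro h
  have := LinearMap.congr_fun (congrArg (fun f => f.hom.hom) h) (show ↑C2 from (1 : ZMod 2))
  exact one_ne_zero (α := ZMod 2) this

lemma pr1_ne_zero : pr1 ≠ 0 := by
  intro h
  have := LinearMap.congr_fun (congrArg (fun f => f.hom.hom) h) (show ↑C2xC2 from ((1 : ZMod 2), (0 : ZMod 2)))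
  exact one_ne_zero (α := ZMod 2) this

lemma pr2_ne_zero : pr2 ≠ 0 := by
  intro h
  have := LinearMap.congr_fun (congrArg (fun f => f.hom.hom) h) (show ↑C2xC2 from ((0 : ZMod 2), (1 : ZMod 2)))
  exact one_ne_zero (α := ZMod 2) this

/-- The coordinate restricts to `0` along any zero map into `C₂`. -/
lemma res_zero_e (L : GlobalTwoTorsionGroupLaw) (B : EA2) :
    L.X.map (0 : B ⟶ C2).op L.e = 0 := by
  have hker : L.X.map (kerIncl (𝟙 C2)).op L.e = 0 := by
    rw [L.euler_exact C2 (𝟙 C2) id_C2_ne_zero L.e]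
    refine ⟨1, ?_⟩
    simp
  have hfac : (0 : B ⟶ C2) = (0 : B ⟶ kerObj (𝟙 C2)) ≫ kerIncl (𝟙 C2) := by
    rw [Limits.zero_comp]
  rw [hfac, op_comp, L.X.map_comp]
  show L.X.map (Quiver.Hom.op (0 : B ⟶ kerObj (𝟙 C2)))
    (L.X.map (kerIncl (𝟙 C2)).op L.e) = 0
  rw [hker, map_zero]

/-- For a global 2-torsion group law `X`, with `e_{1,0}, e_{0,1}, e_{1,1}`
the Euler classes in `X(C₂×C₂)` of the two projections and the multiplication character,
there is `x'` with `e_{1,1} = e_{1,0} + e_{0,1} + x'·e_{1,0}·e_{0,1}`. -/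
theorem stmt14 (L : GlobalTwoTorsionGroupLaw) :
    ∃ x' : L.X.obj (op C2xC2),
      L.X.map mul11.op L.e
        = L.X.map pr1.op L.e + L.X.map pr2.op L.e
          + x' * L.X.map pr1.op L.e * L.X.map pr2.op L.e := by
  set e10 := L.X.map pr1.op L.e with he10
  set e01 := L.X.map pr2.op L.e with he01
  set e11 := L.X.map mul11.op L.e with he11
  have hc2 : kerIncl pr1 ≫ pr1 = 0 := by
    refine FGModuleCat.hom_ext (LinearMap.ext fun x => ?_)
    exact x.2
  have hsum : (mul11 : C2xC2 ⟶ C2) = pr1 + pr2 := FGModuleCat.hom_ext rfl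
  have hc1 : kerIncl pr1 ≫ mul11 = kerIncl pr1 ≫ pr2 := by
    rw [hsum, Preadditive.comp_add, hc2, zero_add]
  have hc4 : kerIncl pr2 ≫ pr2 = 0 := by
    refine FGModuleCat.hom_ext (LinearMap.ext fun x => ?_)
    exact x.2
  have hc3 : kerIncl pr2 ≫ mul11 = kerIncl pr2 ≫ pr1 := by
    rw [hsum, Preadditive.comp_add, hc4, add_zero]
  have key : ∀ {f g : C2xC2 ⟶ C2} (V : C2xC2 ⟶ C2),
      kerIncl V ≫ f = kerIncl V ≫ g →
      L.X.map (kerIncl V).op (L.X.map f.op L.e) =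
        L.X.map (kerIncl V).op (L.X.map g.op L.e) := by
    intro f g V h
    calc L.X.map (kerIncl V).op (L.X.map f.op L.e)
        = L.X.map (kerIncl V ≫ f).op L.e := by rw [op_comp, L.X.map_comp]; rfl
      _ = L.X.map (kerIncl V ≫ g).op L.e := by rw [h]
      _ = L.X.map (kerIncl V).op (L.X.map g.op L.e) := by
            rw [op_comp, L.X.map_comp]; rfl
  have keyz : ∀ {f : C2xC2 ⟶ C2} (V : C2xC2 ⟶ C2),
      kerIncl V ≫ f = 0 →
      L.X.map (kerIncl V).op (L.X.map f.op L.e) = 0 := by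
    intro f V h
    rw [key V (show kerIncl V ≫ f = kerIncl V ≫ (0 : C2xC2 ⟶ C2) by
      rw [h, Limits.comp_zero]), res_zero_e, map_zero]
  -- first restriction: to ker pr1
  have h1 : L.X.map (kerIncl pr1).op (e11 - e10 - e01) = 0 := by
    rw [map_sub, map_sub, key pr1 hc1, keyz pr1 hc2]
    ring
  obtain ⟨y, hy⟩ := (L.euler_exact C2xC2 pr1 pr1_ne_zero _).mp h1
  -- second restriction: to ker pr2
  have h2 : L.X.map (kerIncl pr2).op (e11 - e10 - e01) = 0 := by
    rw [map_sub, map_sub, key pr2 hc3, keyz pr2 hc4]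
    ring
  rw [hy, map_mul] at h2
  have hW : (kerIncl pr2 ≫ pr1 : kerObj pr2 ⟶ C2) ≠ 0 := by
    intro h
    have := LinearMap.congr_fun (congrArg (fun f => f.hom.hom) h)
      ⟨((1 : ZMod 2), (0 : ZMod 2)), LinearMap.mem_ker.mpr rfl⟩
    exact one_ne_zero (α := ZMod 2) this
  have he10res : L.X.map (kerIncl pr2).op e10 =
      L.X.map (kerIncl pr2 ≫ pr1).op L.e := by
    rw [op_comp, L.X.map_comp]; rfl
  rw [he10res] at h2
  have hy0 : L.X.map (kerIncl pr2).op y = 0 := by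
    apply L.euler_regular (kerObj pr2) (kerIncl pr2 ≫ pr1) hW
    show _ * _ = _ * _
    rw [h2, zero_mul]
  obtain ⟨x', hx'⟩ := (L.euler_exact C2xC2 pr2 pr2_ne_zero y).mp hy0
  refine ⟨x', ?_⟩
  rw [hx'] at hy
  linear_combination hy
end

section
/- Let f : X → Y be a natural transformation of functors from elementary abelian 2-groups^op to commutative rings, both equipped with coordinates making them global 2-torsion group laws, with f preserving coordinates. If for every elementary abelian 2-group A the induced map Φ^A(f) : X(A)[e_V^{-1} | 0 ≠ V ∈ A*] → Y(A)[e_V^{-1} | 0 ≠ V ∈ A*] is a ring isomorphism, then f(A) : X(A) → Y(A) is an isomorphism for every A. -/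
open CategoryTheory Opposite

set_option maxHeartbeats 1000000

/-- The multiplicative set of Euler classes of nontrivial characters of `A`
(the geometric fixed points `Φ^A` are obtained by inverting it). -/
def eulerMonoid (X : EA2ᵒᵖ ⥤ CommRingCat) (e : X.obj (op C2)) (A : EA2) :
    Submonoid (X.obj (op A)) :=
  Submonoid.closure {x | ∃ V : A ⟶ C2, V ≠ 0 ∧ x = X.map V.op e}


/-- Every element of the Euler monoid is regular. -/
lemma euler_monoid_regular (L : GlobalTwoTorsionGroupLaw) (A : EA2)
    {t : L.X.obj (op A)} (ht : t ∈ eulerMonoid L.X L.e A) {a b : L.X.obj (op A)}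
    (hab : t * a = t * b) : a = b := by
  induction ht using Submonoid.closure_induction generalizing a b with
  | mem x hx =>
      obtain ⟨V, hV, rfl⟩ := hx
      exact L.euler_regular A V hV (a₁ := a) (a₂ := b)
        (by simpa [mul_comm] using hab)
  | one => simpa using hab
  | mul x y hx hy ihx ihy =>
      exact ihy (ihx (by rw [mul_assoc, mul_assoc] at hab; exact hab))

/-- Naturality: f sends Euler classes to Euler classes. -/
lemma f_euler (L M : GlobalTwoTorsionGroupLaw) (f : L.X ⟶ M.X)
    (hf : f.app (op C2) L.e = M.e) (A : EA2) (V : A ⟶ C2) :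
    f.app (op A) (L.X.map V.op L.e) = M.X.map V.op M.e := by
  have := congrArg (fun g => (CategoryTheory.forget CommRingCat).map g L.e)
    (f.naturality V.op)
  simp only [Functor.map_comp] at this
  rw [← hf]
  simpa using this

/-- Restriction of an Euler class to its kernel is zero. -/
lemma res_euler_zero (L : GlobalTwoTorsionGroupLaw) (A : EA2) (V : A ⟶ C2)
    (hV : V ≠ 0) : L.X.map (kerIncl V).op (L.X.map V.op L.e) = 0 :=
  (L.euler_exact A V hV _).mpr ⟨1, (one_mul _).symm⟩

/-- Whitehead theorem for global 2-torsion group laws. A coordinate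
preserving morphism `f : X → Y` of global 2-torsion group laws that induces an isomorphism
on all geometric fixed points `Φ^A` (the localizations away from the Euler classes of
nontrivial characters) is itself an isomorphism at every `A`. -/
theorem stmt16 (L M : GlobalTwoTorsionGroupLaw) (f : L.X ⟶ M.X)
    (hf : f.app (op C2) L.e = M.e)
    (hle : ∀ A : EA2, eulerMonoid L.X L.e A ≤
      (eulerMonoid M.X M.e A).comap ((f.app (op A)).hom : L.X.obj (op A) →+* M.X.obj (op A)))
    (hiso : ∀ A : EA2, Function.Bijective
      ((IsLocalization.map (M := eulerMonoid L.X L.e A) (T := eulerMonoid M.X M.e A)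
          (Localization (eulerMonoid M.X M.e A))
          ((f.app (op A)).hom : L.X.obj (op A) →+* M.X.obj (op A)) (hle A)
        : Localization (eulerMonoid L.X L.e A) →+* Localization (eulerMonoid M.X M.e A)))) :
    ∀ A : EA2, Function.Bijective (f.app (op A)) := by
  -- Injectivity, for every A.
  have hinj : ∀ A : EA2, Function.Injective (f.app (op A)) := by
    intro A
    have : Function.Injective (((f.app (op A)).hom : L.X.obj (op A) →+* M.X.obj (op A))) := by
      intro a b hab
      have h1 : (IsLocalization.map (M := eulerMonoid L.X L.e A) (S := Localization (eulerMonoid L.X L.e A))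
          (T := eulerMonoid M.X M.e A) (Localization (eulerMonoid M.X M.e A))
          ((f.app (op A)).hom : L.X.obj (op A) →+* M.X.obj (op A)) (hle A))
          (algebraMap ↑(L.X.obj (op A)) (Localization (eulerMonoid L.X L.e A)) (a - b))
          = (IsLocalization.map (M := eulerMonoid L.X L.e A) (S := Localization (eulerMonoid L.X L.e A))
          (T := eulerMonoid M.X M.e A) (Localization (eulerMonoid M.X M.e A))
          ((f.app (op A)).hom : L.X.obj (op A) →+* M.X.obj (op A)) (hle A)) 0 := by
        have := RingHom.congr_fun (IsLocalization.map_comp (S := Localization (eulerMonoid L.X L.e A))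
          (Q := Localization (eulerMonoid M.X M.e A)) (hle A)) (a - b)
        simp only [RingHom.comp_apply] at this
        rw [this, map_zero]
        simp [map_sub, hab]
      have h2 : (algebraMap ↑(L.X.obj (op A)) (Localization (eulerMonoid L.X L.e A))) (a - b) = 0 := by
        exact (hiso A).injective h1
      obtain ⟨m, hm⟩ := (IsLocalization.map_eq_zero_iff (eulerMonoid L.X L.e A) (Localization (eulerMonoid L.X L.e A)) (a - b)).mp h2
      have := euler_monoid_regular L A m.2 (a := a - b) (b := 0) (by simpa using hm)
      exact sub_eq_zero.mp this
    exact this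
  -- Saturation: if y * f(s) is in the range of f for s in the Euler monoid, so is y.
  have hsat : ∀ A : EA2, ∀ s ∈ eulerMonoid L.X L.e A, ∀ y : M.X.obj (op A),
      (∃ x, f.app (op A) x = y * f.app (op A) s) → ∃ x, f.app (op A) x = y := by
    intro A s hs
    induction hs using Submonoid.closure_induction with
    | mem s hsmem =>
        obtain ⟨V, hV, rfl⟩ := hsmem
        intro y hy
        rw [f_euler L M f hf A V] at hy
        obtain ⟨x, hx⟩ := hy
        -- res of f x is zero
        have hres : M.X.map (kerIncl V).op (f.app (op A) x) = 0 := by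
          rw [hx, map_mul, res_euler_zero M A V hV, mul_zero]
        have hnat : f.app (op (kerObj V)) (L.X.map (kerIncl V).op x)
            = M.X.map (kerIncl V).op (f.app (op A) x) := by
          have := congrArg (fun g => g.hom x) (f.naturality (kerIncl V).op)
          simpa using this
        have hres' : f.app (op (kerObj V)) (L.X.map (kerIncl V).op x) = 0 :=
          hnat.trans hres
        have hkz : L.X.map (kerIncl V).op x = 0 := by
          apply hinj (kerObj V)
          simpa using hres'
        obtain ⟨x', hx'⟩ := (L.euler_exact A V hV x).mp hkz
        refine ⟨x', ?_⟩
        apply M.euler_regular A V hV (a₁ := f.app (op A) x') (a₂ := y)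
        show f.app (op A) x' * M.X.map V.op M.e = y * M.X.map V.op M.e
        rw [← f_euler L M f hf A V, ← map_mul, ← hx', hx, f_euler L M f hf A V]
    | one =>
        intro y hy
        simpa using hy
    | mul s t hs ht ihs iht =>
        intro y hy
        obtain ⟨x, hx⟩ := hy
        have : ∃ x, f.app (op A) x = y * f.app (op A) s :=
          iht _ ⟨x, by rw [hx, map_mul, mul_assoc]⟩
        exact ihs y this
  intro A
  refine ⟨hinj A, ?_⟩
  intro y
  obtain ⟨z, hz⟩ := (hiso A).surjective (algebraMap _ (Localization (eulerMonoid M.X M.e A)) y)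
  obtain ⟨⟨x, s⟩, rfl⟩ := IsLocalization.mk'_surjective (eulerMonoid L.X L.e A) z
  rw [IsLocalization.map_mk' (hle A) x s] at hz
  -- From mk' equation derive: ∃ c, c * (y * f s) = c * f x
  have hspec := IsLocalization.mk'_spec (Localization (eulerMonoid M.X M.e A))
    (((f.app (op A)).hom : L.X.obj (op A) →+* M.X.obj (op A)) x)
    (⟨f.app (op A) s.1, hle A s.2⟩ : eulerMonoid M.X M.e A)
  rw [hz] at hspec
  have heq : (algebraMap _ (Localization (eulerMonoid M.X M.e A))) (y * f.app (op A) s.1)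
      = (algebraMap _ _) (((f.app (op A)).hom : L.X.obj (op A) →+* M.X.obj (op A)) x) := by
    simpa [map_mul] using hspec
  obtain ⟨c, hc⟩ := (IsLocalization.eq_iff_exists (eulerMonoid M.X M.e A) _).mp heq
  have hyfs : y * f.app (op A) s.1 = f.app (op A) x := euler_monoid_regular M A c.2 hc
  exact hsat A s.1 s.2 y ⟨x, hyfs.symm⟩
end
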